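/- Define l_0 = l_F - Σ_{j=1}^n (-1)^{p(λ_{≤j})} q^{-λ_{≤j}} l_j in W. Then E(l_0 ∧ l_I) = l_I for every subset I ⊆ {1,...,n}, where E = l_E ⌟. -/

import Mathlib

set_option synthInstance.maxHeartbeats 1000000
set_option maxHeartbeats 1000000

noncomputable section

abbrev Rq : Type := RatFunc ℂ
abbrev qq : Rq := RatFunc.X

def wval (w : ℤ × ℤ) : ℤ := w.1 + w.2
def wpar (w : ℤ × ℤ) : ℤ := w.2

/-- The quantum integer `[m]_q`. -/
def qint (k : ℤ) : Rq := (qq ^ k - qq ^ (-k)) / (qq - qq⁻¹)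

lemma qq_ne_zero : (qq : Rq) ≠ 0 := RatFunc.X_ne_zero

lemma qqD_ne_zero : qq - qq⁻¹ ≠ 0 := by
  intro h
  have hX : (qq : Rq) ≠ 0 := RatFunc.X_ne_zero
  have h2 : qq * qq = 1 := by
    have h1 := sub_eq_zero.mp h
    nth_rewrite 2 [h1]
    rw [mul_inv_cancel₀ hX]
  have h3 : (Polynomial.X * Polynomial.X : Polynomial ℂ) = 1 := by
    apply RatFunc.algebraMap_injective ℂ
    rw [map_mul, map_one, RatFunc.algebraMap_X]
    exact h2
  have := congrArg Polynomial.natDegree h3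
  rw [← pow_two] at this
  simp [Polynomial.natDegree_X_pow] at this

lemma key_zpow (A B : ℤ) :
    qq ^ (-(1 - B)) * (qq ^ A * ((qq ^ (B - A) - qq ^ (-(B - A))) / (qq - qq⁻¹))) =
      (qq ^ (2 * B - 1) - qq ^ (2 * A - 1)) / (qq - qq⁻¹) := by
  have hX : (qq : Rq) ≠ 0 := RatFunc.X_ne_zero
  have hnum : qq ^ (-(1 - B)) * (qq ^ A * (qq ^ (B - A) - qq ^ (-(B - A)))) =
      qq ^ (2 * B - 1) - qq ^ (2 * A - 1) := by
    rw [mul_sub, mul_sub, ← zpow_add₀ hX, ← zpow_add₀ hX, ← zpow_add₀ hX, ← zpow_add₀ hX]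
    congr 1 <;> congr 1 <;> ring
  calc qq ^ (-(1 - B)) * (qq ^ A * ((qq ^ (B - A) - qq ^ (-(B - A))) / (qq - qq⁻¹)))
      = (qq ^ (-(1 - B)) * (qq ^ A * (qq ^ (B - A) - qq ^ (-(B - A))))) / (qq - qq⁻¹) := by
        ring
    _ = (qq ^ (2 * B - 1) - qq ^ (2 * A - 1)) / (qq - qq⁻¹) := by rw [hnum]

lemma key_term (c : Rq) (hc : c * c = 1) (A B : ℤ) :
    c * qq ^ A * ((qq ^ (B - A) - qq ^ (-(B - A))) / (qq - qq⁻¹)) * (c * qq ^ (-(1 - B))) =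
      (qq ^ (2 * B - 1) - qq ^ (2 * A - 1)) / (qq - qq⁻¹) := by
  calc c * qq ^ A * ((qq ^ (B - A) - qq ^ (-(B - A))) / (qq - qq⁻¹)) * (c * qq ^ (-(1 - B)))
      = (c * c) * (qq ^ (-(1 - B)) * (qq ^ A * ((qq ^ (B - A) - qq ^ (-(B - A))) / (qq - qq⁻¹)))) := by
        ring
    _ = _ := by rw [hc, one_mul, key_zpow]

lemma contract_prod_eq_zero {N : Type*} [AddCommGroup N] [Module Rq N]
    (phi : Module.Dual Rq N) {k : ℕ} (g : Fin k → N) (hg : ∀ i, phi (g i) = 0)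
    (L : List (Fin k)) :
    CliffordAlgebra.contractLeft (Q := (0 : QuadraticForm Rq N)) phi
      ((L.map fun i => ExteriorAlgebra.ι Rq (g i)).prod) = 0 := by
  induction L with
  | nil => simp [CliffordAlgebra.contractLeft_one]
  | cons a t ih =>
    rw [List.map_cons, List.prod_cons, CliffordAlgebra.contractLeft_ι_mul, ih, hg a]
    simp

lemma contract_step {N : Type*} [AddCommGroup N] [Module Rq N]
    (phi : Module.Dual Rq N) (l0 : N) (x : ExteriorAlgebra Rq N)
    (h1 : phi l0 = 1)
    (h2 : CliffordAlgebra.contractLeft (Q := (0 : QuadraticForm Rq N)) phi x = 0) :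
    CliffordAlgebra.contractLeft (Q := (0 : QuadraticForm Rq N)) phi
      (ExteriorAlgebra.ι Rq l0 * x) = x := by
  rw [CliffordAlgebra.contractLeft_ι_mul, h1, h2, one_smul, mul_zero, sub_zero]


/-- In the exterior-algebra model of `V_P ⊗ L(λ_{n+1})`
(weight sequence `λ₁, …, λ_{n+1}`, with each `λᵢ ∈ {ε₁, -ε₂}` for `i ≤ n` and
`⟨h₁+h₂, λ_{n+1}⟩ = 1 - Σᵢ Pᵢ`, i.e. the values `⟨h₁+h₂, λᵢ⟩` sum to `1`), define
`l₀ = l_F - Σ_{j=1}^n (-1)^{p(λ_{≤j})} q^{-λ_{≤j}} l_j`.  Then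
`E(l₀ ∧ l_I) = l_I` for every subset `I ⊆ {1, …, n}`, where `E = l_E ⌟`. -/
theorem stmt7 {n : ℕ} (P : Fin n → ℤ) (hP : ∀ i, P i = 1 ∨ P i = -1)
    (wt : Fin (n + 1) → ℤ × ℤ)
    (hwt : ∀ i : Fin n, wt i.castSucc = if P i = 1 then (1, 0) else (0, -1))
    (hval : ∑ j, wval (wt j) = 1) :
    let M : Type := Fin (n + 1) → Rq
    let e : Fin (n + 1) → M := fun j => Pi.single j 1
    let psumLt : Fin (n + 1) → ℤ := fun j => ∑ i ∈ Finset.univ.filter (· < j), wpar (wt i)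
    let vsumLt : Fin (n + 1) → ℤ := fun j => ∑ i ∈ Finset.univ.filter (· < j), wval (wt i)
    let vsumGt : Fin (n + 1) → ℤ := fun j => ∑ i ∈ Finset.univ.filter (j < ·), wval (wt i)
    let psumLe : Fin (n + 1) → ℤ := fun j => ∑ i ∈ Finset.univ.filter (· ≤ j), wpar (wt i)
    let vsumLe : Fin (n + 1) → ℤ := fun j => ∑ i ∈ Finset.univ.filter (· ≤ j), wval (wt i)
    let phiE : Module.Dual Rq M :=
      ∑ j, (((-1 : Rq) ^ psumLt j) * qq ^ (-(vsumGt j))) • LinearMap.proj j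
    let lF : M :=
      ∑ j, (((-1 : Rq) ^ psumLt j) * qq ^ (vsumLt j) * qint (wval (wt j))) • e j
    let lvec : Fin n → M := fun i =>
      (-((-1 : Rq) ^ wpar (wt i.castSucc))) • e i.castSucc +
        (qq ^ (-(wval (wt i.succ)))) • e i.succ
    let l0 : M :=
      lF - ∑ j : Fin n,
        (((-1 : Rq) ^ psumLe j.castSucc) * qq ^ (-(vsumLe j.castSucc))) • lvec j
    let lprod : Finset (Fin n) → ExteriorAlgebra Rq M := fun I =>
      ((I.sort (· ≤ ·)).map fun i => ExteriorAlgebra.ι Rq (lvec i)).prod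
    ∀ I : Finset (Fin n),
      CliffordAlgebra.contractLeft (Q := (0 : QuadraticForm Rq M)) phiE
        (ExteriorAlgebra.ι Rq l0 * lprod I) = lprod I := by
  intro M e psumLt vsumLt vsumGt psumLe vsumLe phiE lF lvec l0 lprod I
  have hX : (qq : Rq) ≠ 0 := qq_ne_zero
  -- value of phiE on basis vectors
  have hE : ∀ k, phiE (e k) = ((-1 : Rq) ^ psumLt k) * qq ^ (-(vsumGt k)) := by
    intro k
    simp only [phiE, LinearMap.sum_apply, LinearMap.smul_apply, smul_eq_mul, e]
    have h1 : ∀ x : Fin (n + 1), (LinearMap.proj x : M →ₗ[Rq] Rq) (Pi.single k 1) =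
        (if x = k then 1 else 0 : Rq) := by
      intro x
      rw [LinearMap.proj_apply]
      exact Pi.single_apply k (1 : Rq) x
    rw [Finset.sum_congr rfl (fun x _ => by rw [h1 x])]
    simp [Finset.sum_ite_eq']
  -- recurrences for the partial sums
  have hps : ∀ i : Fin n, psumLt i.succ = wpar (wt i.castSucc) + psumLt i.castSucc := by
    intro i
    have hset : (Finset.univ.filter (· < i.succ) : Finset (Fin (n + 1))) =
        insert i.castSucc (Finset.univ.filter (· < i.castSucc)) := by
      ext j
      simp only [Finset.mem_filter, Finset.mem_univ, true_and, Finset.mem_insert,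
        Fin.lt_def, Fin.ext_iff, Fin.val_succ, Fin.coe_castSucc]
      omega
    show (∑ j ∈ Finset.univ.filter (· < i.succ), wpar (wt j)) = _
    rw [hset, Finset.sum_insert (by simp)]
  have hvg : ∀ i : Fin n, vsumGt i.castSucc = wval (wt i.succ) + vsumGt i.succ := by
    intro i
    have hset : (Finset.univ.filter (i.castSucc < ·) : Finset (Fin (n + 1))) =
        insert i.succ (Finset.univ.filter (i.succ < ·)) := by
      ext j
      simp only [Finset.mem_filter, Finset.mem_univ, true_and, Finset.mem_insert,
        Fin.lt_def, Fin.ext_iff, Fin.val_succ, Fin.coe_castSucc]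
      omega
    show (∑ j ∈ Finset.univ.filter (i.castSucc < ·), wval (wt j)) = _
    rw [hset, Finset.sum_insert (by simp)]
  -- E kills each l_i
  have hlv : ∀ i : Fin n, phiE (lvec i) = 0 := by
    intro i
    have hv : phiE (lvec i) =
        (-((-1 : Rq) ^ wpar (wt i.castSucc))) * phiE (e i.castSucc) +
          (qq ^ (-(wval (wt i.succ)))) * phiE (e i.succ) := by
      simp only [lvec, map_add, map_smul, smul_eq_mul]
    rw [hv, hE, hE, hps i, hvg i, neg_add, zpow_add₀ hX,
      zpow_add₀ (by norm_num : (-1 : Rq) ≠ 0)]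
    ring
  -- natural-number reindexing of the partial sums
  set v' : ℕ → ℤ := fun i => if h : i < n + 1 then wval (wt ⟨i, h⟩) else 0 with hv'def
  set S : ℕ → ℤ := fun k => ∑ i ∈ Finset.range k, v' i with hSdef
  have hL1 : ∀ j : Fin (n + 1), vsumLt j = S j.val := by
    intro j
    show (∑ i ∈ Finset.univ.filter (· < j), wval (wt i)) = ∑ i ∈ Finset.range j.val, v' i
    rw [Finset.sum_filter]
    have h1 : ∀ i : Fin (n + 1), (if i < j then wval (wt i) else 0) =
        (fun k => if k < j.val then v' k else 0) i.val := by
      intro i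
      simp only [Fin.lt_def, hv'def, i.isLt, dif_pos, Fin.eta]
    rw [Finset.sum_congr rfl (fun i _ => h1 i),
      Fin.sum_univ_eq_sum_range (fun k => if k < j.val then v' k else 0) (n + 1),
      ← Finset.sum_filter]
    congr 1
    ext k
    simp only [Finset.mem_filter, Finset.mem_range]
    omega
  have hL2 : ∀ j : Fin (n + 1), vsumGt j = S (n + 1) - S (j.val + 1) := by
    intro j
    show (∑ i ∈ Finset.univ.filter (j < ·), wval (wt i)) = S (n + 1) - S (j.val + 1)
    rw [Finset.sum_filter]
    have h1 : ∀ i : Fin (n + 1), (if j < i then wval (wt i) else 0) =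
        (fun k => if j.val < k then v' k else 0) i.val := by
      intro i
      simp only [Fin.lt_def, hv'def, i.isLt, dif_pos, Fin.eta]
    rw [Finset.sum_congr rfl (fun i _ => h1 i),
      Fin.sum_univ_eq_sum_range (fun k => if j.val < k then v' k else 0) (n + 1),
      ← Finset.sum_filter]
    have hsplit := Finset.sum_filter_add_sum_filter_not (Finset.range (n + 1))
      (fun k => j.val < k) v'
    have hcompl : (Finset.range (n + 1)).filter (fun k => ¬ j.val < k) =
        Finset.range (j.val + 1) := by
      ext k
      simp only [Finset.mem_filter, Finset.mem_range, not_lt]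
      have := j.isLt
      omega
    rw [hcompl] at hsplit
    have : S (n + 1) = (∑ i ∈ (Finset.range (n + 1)).filter (fun k => j.val < k), v' i) +
        S (j.val + 1) := by
      exact hsplit.symm
    omega
  have hStot : S (n + 1) = 1 := by
    show (∑ i ∈ Finset.range (n + 1), v' i) = 1
    rw [← Fin.sum_univ_eq_sum_range v' (n + 1)]
    rw [← hval]
    apply Finset.sum_congr rfl
    intro i _
    simp only [hv'def, i.isLt, dif_pos, Fin.eta]
  have hSsucc : ∀ j : Fin (n + 1), S (j.val + 1) = S j.val + wval (wt j) := by
    intro j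
    show (∑ i ∈ Finset.range (j.val + 1), v' i) = S j.val + wval (wt j)
    rw [Finset.sum_range_succ]
    simp only [hv'def, j.isLt, dif_pos, Fin.eta]
    rfl
  -- E(l_F) = 1
  have hlF1 : phiE lF = 1 := by
    have hexp : phiE lF = ∑ j : Fin (n + 1),
        ((-1 : Rq) ^ psumLt j * qq ^ (vsumLt j) * qint (wval (wt j))) * phiE (e j) := by
      simp only [lF, map_sum, map_smul, smul_eq_mul]
    rw [hexp]
    have step : ∀ j : Fin (n + 1),
        ((-1 : Rq) ^ psumLt j * qq ^ (vsumLt j) * qint (wval (wt j))) * phiE (e j) =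
          (qq ^ (2 * S (j.val + 1) - 1) - qq ^ (2 * S j.val - 1)) / (qq - qq⁻¹) := by
      intro j
      rw [hE j, hL1 j, qint]
      have hgt : -(vsumGt j) = -(1 - S (j.val + 1)) := by rw [hL2 j, hStot]
      have hv : wval (wt j) = S (j.val + 1) - S j.val := by rw [hSsucc j]; ring
      rw [hgt, hv]
      exact key_term _ (by simp [← mul_zpow]) _ _
    rw [Finset.sum_congr rfl (fun j _ => step j)]
    rw [Fin.sum_univ_eq_sum_range
      (fun k => (qq ^ (2 * S (k + 1) - 1) - qq ^ (2 * S k - 1)) / (qq - qq⁻¹)) (n + 1)]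
    rw [← Finset.sum_div, Finset.sum_range_sub (fun k => qq ^ (2 * S k - 1))]
    have hS0 : S 0 = 0 := by show (∑ i ∈ Finset.range 0, v' i) = 0; simp
    rw [hStot, hS0, show (2 * (1:ℤ) - 1) = 1 by ring, show (2 * (0:ℤ) - 1) = -1 by ring,
      zpow_one, zpow_neg_one, div_self qqD_ne_zero]
  -- E(l_0) = 1
  have hl01 : phiE l0 = 1 := by
    show phiE (lF - ∑ j : Fin n,
        (((-1 : Rq) ^ psumLe j.castSucc) * qq ^ (-(vsumLe j.castSucc))) • lvec j) = 1
    rw [map_sub, hlF1, map_sum]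
    have hz : ∀ j : Fin n, phiE
        ((((-1 : Rq) ^ psumLe j.castSucc) * qq ^ (-(vsumLe j.castSucc))) • lvec j) = 0 := by
      intro j
      rw [map_smul, hlv j, smul_zero]
    rw [Finset.sum_congr rfl (fun j _ => hz j), Finset.sum_const_zero, sub_zero]
  exact contract_step phiE l0 (lprod I) hl01
    (contract_prod_eq_zero phiE lvec hlv (I.sort (· ≤ ·)))

end
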